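/- Let 𝒳 ⊂ ℙⁿ × ℙ^{N_d} be the universal hypersurface of degree d, defined by Σ_{|α|=d} a_α Z^α = 0 for [a] ∈ ℙ^{N_d} and [Z] ∈ ℙⁿ. Then the twisted logarithmic tangent bundle T_{ℙⁿ×ℙ^{N_d}}(−log 𝒳)(1,0) := T_{ℙⁿ×ℙ^{N_d}}(−log 𝒳) ⊗ p*O_{ℙⁿ}(1), where p is the projection to ℙⁿ, is generated by its global sections. -/

import Mathlib

/-!
# Statement 6

Let `𝒳 ⊂ ℙⁿ × ℙ^{N_d}` be the universal hypersurface of degree `d`, defined by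
`Σ_{|α|=d} a_α Z^α = 0`.  Then the twisted logarithmic tangent bundle
`T_{ℙⁿ×ℙ^{N_d}}(-log 𝒳)(1,0) = T_{ℙⁿ×ℙ^{N_d}}(-log 𝒳) ⊗ p⁎O_{ℙⁿ}(1)` is generated by its
global sections.

Conventions: everything is expressed on the affine bicone `ℂ^{n+1} × ℂ^{N_d+1}`.
A global section of `T_{ℙⁿ×ℙ^{N_d}}(-log 𝒳) ⊗ p⁎O_{ℙⁿ}(1)` is a polynomial vector field
`V = Σᵢ V_{Zᵢ} ∂/∂Zᵢ + Σ_α V_{a_α} ∂/∂a_α` on the bicone whose `Z`-components are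
bihomogeneous of bidegree `(2, 0)` and whose `a`-components are bihomogeneous of bidegree
`(1, 1)` (the extra `Z`-degree accounting for the twist by `p⁎O(1)`), and which is
logarithmic along `𝒳`, i.e. `V(P) = λ·P` for a (bidegree `(1,0)`) polynomial `λ` — the
residue datum.  Global generation at a point `([Z], [a])` means: every logarithmic tangent
vector can be realized as the value of a global section.  Concretely: for every `(Z, a)`
with `Z ≠ 0 ≠ a` and every vector `(w_Z, w_a)` which is tangent to the cone of `𝒳` whenever
`P(Z, a) = 0`, and every prescribed residue value `μ` (relevant only when `P(Z,a) = 0`),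
some global logarithmic field `V` takes at `(Z, a)` the value `(w_Z, w_a)` modulo the Euler
directions `(ℂ·Z, ℂ·a)` and has residue `λ(Z, a) = μ`; this expresses exactly that the
values of the global sections span the full fiber of the locally free sheaf
`T(-log 𝒳)(1,0)` at every point.
-/

noncomputable section

open MvPolynomial


noncomputable section

open MvPolynomial

/-- The set of monomials of degree `d` in `n+1` variables: multi-indices
`α = (α₀,…,α_n)` with `|α| = Σ αᵢ = d`.  This indexes the coefficients `a_α` of a degree-`d`
form, i.e. the coordinates on `H⁰(ℙⁿ, O(d))`. -/
def degIdx (n d : ℕ) : Type := {α : Fin (n + 1) → ℕ // ∑ i, α i = d}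

instance degIdx.finite (n d : ℕ) : Finite (degIdx n d) := by
  have h : {α : Fin (n + 1) → ℕ | ∑ i, α i = d}.Finite := by
    apply (Set.finite_Icc (fun _ : Fin (n + 1) => 0) fun _ => d).subset
    intro α hα
    simp only [Set.mem_Icc] at *
    constructor
    · intro i; exact Nat.zero_le _
    · intro i
      calc α i ≤ ∑ j, α j := Finset.single_le_sum (fun j _ => Nat.zero_le (α j)) (Finset.mem_univ i)
        _ = d := hα
  exact h.to_subtype

instance degIdx.fintype (n d : ℕ) : Fintype (degIdx n d) := Fintype.ofFinite _

/-- The homogeneous degree-`d` polynomial with coefficients `a = (a_α)`: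
`Σ_{|α| = d} a_α Z^α`. -/
def formOfCoeffs {n d : ℕ} (a : degIdx n d → ℂ) : MvPolynomial (Fin (n + 1)) ℂ :=
  ∑ α : degIdx n d, C (a α) * ∏ i, X i ^ (α.1 i)

/-- The variables `(Z₀,…,Z_n; (a_α)_{|α|=d})` of the bihomogeneous coordinate ring of
`ℙⁿ × ℙ^{N_d}`. -/
abbrev UnivVars (n d : ℕ) := Fin (n + 1) ⊕ degIdx n d

/-- The defining polynomial `P = Σ_{|α|=d} a_α Z^α` of the universal degree-`d`
hypersurface `𝒳 ⊂ ℙⁿ × ℙ^{N_d}`. -/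
def univPoly (n d : ℕ) : MvPolynomial (UnivVars n d) ℂ :=
  ∑ α : degIdx n d, X (Sum.inr α) * ∏ i : Fin (n + 1), X (Sum.inl i) ^ (α.1 i)

/-- weight `1` on the `Z`-variables, `0` on the `a`-variables -/
def weightZ (n d : ℕ) : UnivVars n d → ℕ := Sum.elim (fun _ => 1) fun _ => 0

/-- weight `0` on the `Z`-variables, `1` on the `a`-variables -/
def weightA (n d : ℕ) : UnivVars n d → ℕ := Sum.elim (fun _ => 0) fun _ => 1

/-- Bihomogeneity of bidegree `(p, q)` on `ℙⁿ × ℙ^{N_d}`. -/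
def IsBihomogeneous {n d : ℕ} (F : MvPolynomial (UnivVars n d) ℂ) (p q : ℕ) : Prop :=
  F.IsWeightedHomogeneous (weightZ n d) p ∧ F.IsWeightedHomogeneous (weightA n d) q

/-- A global section of the twisted logarithmic tangent bundle
`T_{ℙⁿ×ℙ^{N_d}}(-log 𝒳) ⊗ p⁎O_{ℙⁿ}(1)`, written on the affine bicone: a polynomial vector
field `V = Σᵢ VZ i·∂/∂Zᵢ + Σ_α VA α·∂/∂a_α` with `Z`-components of bidegree `(2,0)` and
`a`-components of bidegree `(1,1)`, logarithmic along `𝒳`: `V(P) = lam·P` with `lam` of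
bidegree `(1, 0)` (the residue of `V` along `𝒳`). -/
structure TwistedLogTangentSection (n d : ℕ) where
  /-- the `∂/∂Zᵢ`-components -/
  VZ : Fin (n + 1) → MvPolynomial (UnivVars n d) ℂ
  /-- the `∂/∂a_α`-components -/
  VA : degIdx n d → MvPolynomial (UnivVars n d) ℂ
  /-- the residue `λ` with `V(P) = λ·P` -/
  lam : MvPolynomial (UnivVars n d) ℂ
  hVZ : ∀ i, IsBihomogeneous (VZ i) 2 0
  hVA : ∀ α, IsBihomogeneous (VA α) 1 1
  hlam : IsBihomogeneous lam 1 0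
  /-- `V` is logarithmic along `𝒳`: `V(P) = λ·P` -/
  hlog : (∑ i : Fin (n + 1), VZ i * pderiv (Sum.inl i) (univPoly n d)) +
      (∑ α : degIdx n d, VA α * pderiv (Sum.inr α) (univPoly n d)) =
    lam * univPoly n d

-- piece 1: basic infrastructure, to be inserted before the theorem
namespace Stmt6Aux

variable {n d : ℕ}

instance : DecidableEq (degIdx n d) := fun a b =>
  decidable_of_iff (a.1 = b.1) Subtype.ext_iff.symm

/-- The monomial `∏ Z_i^{α i}` as a polynomial in the universal variables. -/
def XZ (α : degIdx n d) : MvPolynomial (UnivVars n d) ℂ :=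
  ∏ i, X (Sum.inl i) ^ (α.1 i)

/-- The exponent finsupp of `XZ α`. -/
def mOf (α : degIdx n d) : UnivVars n d →₀ ℕ :=
  Finsupp.equivFunOnFinite.symm (Sum.elim α.1 fun _ => 0)

@[simp] lemma mOf_inl (α : degIdx n d) (i : Fin (n + 1)) : mOf α (Sum.inl i) = α.1 i := rfl

@[simp] lemma mOf_inr (α : degIdx n d) (β : degIdx n d) : mOf α (Sum.inr β) = 0 := rfl

lemma mOf_injective : Function.Injective (mOf (n := n) (d := d)) := by
  intro α β h
  apply Subtype.ext
  funext i
  have := congrArg (fun f => f (Sum.inl i)) h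
  simpa using this

lemma monomial_eq_prod (m : UnivVars n d →₀ ℕ) (c : ℂ) :
    monomial m c = C c * (∏ i, X (Sum.inl i) ^ m (Sum.inl i)) *
      (∏ β : degIdx n d, X (Sum.inr β) ^ m (Sum.inr β)) := by
  rw [monomial_eq, Finsupp.prod_pow, Fintype.prod_sum_type, mul_assoc]

lemma XZ_eq_monomial (α : degIdx n d) : XZ α = monomial (mOf α) 1 := by
  rw [monomial_eq_prod, C_1, one_mul]
  simp [XZ]

lemma weightZ_apply (m : UnivVars n d →₀ ℕ) :
    Finsupp.weight (weightZ n d) m = ∑ i, m (Sum.inl i) := by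
  rw [Finsupp.weight_apply, Finsupp.sum_fintype _ _ (by simp)]
  rw [Fintype.sum_sum_type]
  simp [weightZ]

lemma weightA_apply (m : UnivVars n d →₀ ℕ) :
    Finsupp.weight (weightA n d) m = ∑ β : degIdx n d, m (Sum.inr β) := by
  rw [Finsupp.weight_apply, Finsupp.sum_fintype _ _ (by simp)]
  rw [Fintype.sum_sum_type]
  simp [weightA]

end Stmt6Aux

namespace Stmt6Aux

variable {n d : ℕ}

lemma isWH_sub {σ : Type*} {w : σ → ℕ} {f g : MvPolynomial σ ℂ} {m : ℕ}
    (hf : f.IsWeightedHomogeneous w m) (hg : g.IsWeightedHomogeneous w m) :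
    (f - g).IsWeightedHomogeneous w m := by
  have : f - g ∈ weightedHomogeneousSubmodule ℂ w m :=
    sub_mem ((mem_weightedHomogeneousSubmodule _ _ _ _).2 hf)
      ((mem_weightedHomogeneousSubmodule _ _ _ _).2 hg)
  exact (mem_weightedHomogeneousSubmodule _ _ _ _).1 this

lemma bihom_C (c : ℂ) : IsBihomogeneous (n := n) (d := d) (C c) 0 0 :=
  ⟨isWeightedHomogeneous_C _ _, isWeightedHomogeneous_C _ _⟩

lemma bihom_X_inl (i : Fin (n + 1)) :
    IsBihomogeneous (n := n) (d := d) (X (Sum.inl i)) 1 0 := by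
  constructor
  · simpa [weightZ] using isWeightedHomogeneous_X ℂ (weightZ n d) (Sum.inl i)
  · simpa [weightA] using isWeightedHomogeneous_X ℂ (weightA n d) (Sum.inl i)

lemma bihom_X_inr (β : degIdx n d) :
    IsBihomogeneous (n := n) (d := d) (X (Sum.inr β)) 0 1 := by
  constructor
  · simpa [weightZ] using isWeightedHomogeneous_X ℂ (weightZ n d) (Sum.inr β)
  · simpa [weightA] using isWeightedHomogeneous_X ℂ (weightA n d) (Sum.inr β)

lemma bihom_mul {f g : MvPolynomial (UnivVars n d) ℂ} {p q p' q' : ℕ}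
    (hf : IsBihomogeneous f p q) (hg : IsBihomogeneous g p' q') :
    IsBihomogeneous (f * g) (p + p') (q + q') :=
  ⟨hf.1.mul hg.1, hf.2.mul hg.2⟩

lemma bihom_add {f g : MvPolynomial (UnivVars n d) ℂ} {p q : ℕ}
    (hf : IsBihomogeneous f p q) (hg : IsBihomogeneous g p q) :
    IsBihomogeneous (f + g) p q :=
  ⟨hf.1.add hg.1, hf.2.add hg.2⟩

lemma bihom_sub {f g : MvPolynomial (UnivVars n d) ℂ} {p q : ℕ}
    (hf : IsBihomogeneous f p q) (hg : IsBihomogeneous g p q) :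
    IsBihomogeneous (f - g) p q :=
  ⟨isWH_sub hf.1 hg.1, isWH_sub hf.2 hg.2⟩

lemma bihom_zero {p q : ℕ} : IsBihomogeneous (n := n) (d := d) 0 p q :=
  ⟨isWeightedHomogeneous_zero _ _ _, isWeightedHomogeneous_zero _ _ _⟩

lemma bihom_sum {ι : Type*} (s : Finset ι) (f : ι → MvPolynomial (UnivVars n d) ℂ)
    {p q : ℕ} (h : ∀ i ∈ s, IsBihomogeneous (f i) p q) :
    IsBihomogeneous (∑ i ∈ s, f i) p q :=
  ⟨IsWeightedHomogeneous.sum s f p fun i hi => (h i hi).1,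
   IsWeightedHomogeneous.sum s f q fun i hi => (h i hi).2⟩

lemma bihom_XZ (α : degIdx n d) : IsBihomogeneous (XZ α) d 0 := by
  constructor
  · rw [XZ_eq_monomial]
    apply isWeightedHomogeneous_monomial
    rw [weightZ_apply]
    simpa using α.2
  · rw [XZ_eq_monomial]
    apply isWeightedHomogeneous_monomial
    rw [weightA_apply]
    simp

lemma bihom_univPoly : IsBihomogeneous (univPoly n d) d 1 := by
  apply bihom_sum
  intro α _
  have h := bihom_mul (bihom_X_inr α) (bihom_XZ α)
  simpa [XZ] using h

/-- `∂P/∂a_β = Z^β`. -/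
lemma pderiv_inr_univPoly (β : degIdx n d) :
    pderiv (Sum.inr β) (univPoly n d) = XZ β := by
  rw [univPoly, map_sum]
  rw [Finset.sum_eq_single β]
  · have h1 : pderiv (Sum.inr β) (∏ i, (X (Sum.inl i) : MvPolynomial (UnivVars n d) ℂ) ^ (β.1 i))
        = 0 := by
      rw [show (∏ i, (X (Sum.inl i) : MvPolynomial (UnivVars n d) ℂ) ^ (β.1 i)) = XZ β from rfl,
        XZ_eq_monomial, pderiv_monomial]
      simp
    rw [pderiv_mul, h1, pderiv_X_self]
    simp [XZ]
  · intro α _ hne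
    have h1 : pderiv (Sum.inr β) (∏ i, (X (Sum.inl i) : MvPolynomial (UnivVars n d) ℂ) ^ (α.1 i))
        = 0 := by
      rw [show (∏ i, (X (Sum.inl i) : MvPolynomial (UnivVars n d) ℂ) ^ (α.1 i)) = XZ α from rfl,
        XZ_eq_monomial, pderiv_monomial]
      simp
    rw [pderiv_mul, h1, pderiv_X_of_ne (by simpa using hne)]
    simp
  · simp

lemma isWH_pderiv {σ : Type*} [DecidableEq σ] {w : σ → ℕ} {f : MvPolynomial σ ℂ} {m : ℕ}
    (hf : f.IsWeightedHomogeneous w m) (v : σ) {k : ℕ} (hk : k + w v = m) :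
    (pderiv v f).IsWeightedHomogeneous w k := by
  nth_rewrite 1 [f.as_sum]
  rw [map_sum]
  apply IsWeightedHomogeneous.sum
  intro s hs
  rw [pderiv_monomial]
  by_cases h0 : s v = 0
  · simp only [h0, Nat.cast_zero, mul_zero]
    rw [show (monomial (s - Finsupp.single v 1)) (0 : ℂ) = 0 from map_zero _]
    exact isWeightedHomogeneous_zero _ _ _
  · apply isWeightedHomogeneous_monomial
    have hsm : Finsupp.weight w s = m := hf (MvPolynomial.mem_support_iff.1 hs)
    have hsplit : s = (s - Finsupp.single v 1) + Finsupp.single v 1 := by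
      ext x
      rcases eq_or_ne x v with rfl | hx
      · simp only [Finsupp.add_apply, Finsupp.tsub_apply, Finsupp.single_eq_same]
        omega
      · simp [Finsupp.single_apply, Ne.symm hx]
    have : Finsupp.weight w s =
        Finsupp.weight w (s - Finsupp.single v 1) + Finsupp.weight w (Finsupp.single v 1) := by
      nth_rewrite 1 [hsplit]; exact map_add _ _ _
    have hws : Finsupp.weight w (Finsupp.single v 1) = w v := by
      rw [Finsupp.weight_apply, Finsupp.sum_single_index] <;> simp
    omega

end Stmt6Aux

namespace Stmt6Aux

variable {n d : ℕ}

lemma euler_weightA {F : MvPolynomial (UnivVars n d) ℂ}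
    (hF : F.IsWeightedHomogeneous (weightA n d) 1) :
    F = ∑ β : degIdx n d, X (Sum.inr β) * pderiv (Sum.inr β) F := by
  have key : ∀ s ∈ F.support, ∀ c : ℂ,
      (∑ β : degIdx n d, X (Sum.inr β) * pderiv (Sum.inr β) (monomial s c)) = monomial s c := by
    intro s hs c
    have hs1 : ∑ β : degIdx n d, s (Sum.inr β) = 1 := by
      rw [← weightA_apply]; exact hF (mem_support_iff.1 hs)
    have hex : ∃ β₀ : degIdx n d, s (Sum.inr β₀) ≠ 0 := by
      by_contra hno
      push_neg at hno
      rw [Finset.sum_eq_zero (fun β _ => hno β)] at hs1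
      exact one_ne_zero hs1.symm
    obtain ⟨β₀, hβ₀⟩ := hex
    have hrest : s (Sum.inr β₀) + ∑ β ∈ Finset.univ.erase β₀, s (Sum.inr β) = 1 := by
      rw [Finset.add_sum_erase _ (fun β : degIdx n d => s (Sum.inr β)) (Finset.mem_univ β₀)]
      exact hs1
    have hone : s (Sum.inr β₀) = 1 := by omega
    have hzero : ∀ β : degIdx n d, β ≠ β₀ → s (Sum.inr β) = 0 := by
      intro β hβ
      have hsum0 : ∑ β ∈ Finset.univ.erase β₀, s (Sum.inr β) = 0 := by omega
      exact Finset.sum_eq_zero_iff.1 hsum0 β (Finset.mem_erase.2 ⟨hβ, Finset.mem_univ β⟩)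
    rw [Finset.sum_eq_single β₀]
    · rw [pderiv_monomial, hone]
      have : (X (Sum.inr β₀) : MvPolynomial (UnivVars n d) ℂ)
          = monomial (Finsupp.single (Sum.inr β₀) 1) 1 := rfl
      rw [this, monomial_mul]
      have hsingle : Finsupp.single (Sum.inr β₀ : UnivVars n d) 1
          + (s - Finsupp.single (Sum.inr β₀) 1) = s := by
        ext v
        rcases eq_or_ne v (Sum.inr β₀ : UnivVars n d) with rfl | hv
        · simp only [Finsupp.add_apply, Finsupp.tsub_apply, Finsupp.single_eq_same]
          omega
        · simp [Finsupp.single_apply, Ne.symm hv]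
      rw [hsingle]
      simp
    · intro β _ hβ
      rw [pderiv_monomial, hzero β hβ]
      simp
    · simp
  calc F = ∑ s ∈ F.support, monomial s (coeff s F) := F.as_sum
    _ = ∑ s ∈ F.support, ∑ β : degIdx n d,
          X (Sum.inr β) * pderiv (Sum.inr β) (monomial s (coeff s F)) :=
        Finset.sum_congr rfl fun s hs => (key s hs _).symm
    _ = ∑ β : degIdx n d, X (Sum.inr β) * pderiv (Sum.inr β) F := by
        rw [Finset.sum_comm]
        refine Finset.sum_congr rfl fun β _ => ?_
        rw [← Finset.mul_sum, ← map_sum, ← F.as_sum]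

lemma wHC_mul_left {σ : Type*} {w : σ → ℕ} {u : MvPolynomial σ ℂ} {k : ℕ}
    (hu : u.IsWeightedHomogeneous w k) (m : ℕ) (h : MvPolynomial σ ℂ) :
    weightedHomogeneousComponent w (k + m) (u * h) =
      u * weightedHomogeneousComponent w m h := by
  induction h using MvPolynomial.induction_on' with
  | add p q hp hq => rw [mul_add, map_add, map_add, hp, hq, mul_add]
  | monomial s c =>
    by_cases hw : Finsupp.weight w s = m
    · rw [IsWeightedHomogeneous.weightedHomogeneousComponent_same
          (hu.mul (isWeightedHomogeneous_monomial _ _ _ hw)),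
        IsWeightedHomogeneous.weightedHomogeneousComponent_same
          (isWeightedHomogeneous_monomial _ _ _ hw)]
    · rw [IsWeightedHomogeneous.weightedHomogeneousComponent_ne _
          (hu.mul (isWeightedHomogeneous_monomial _ _ _ rfl)) (by omega),
        IsWeightedHomogeneous.weightedHomogeneousComponent_ne _
          (isWeightedHomogeneous_monomial _ _ _ rfl) (by omega), mul_zero]

lemma isWH_wHC {σ : Type*} {w' : σ → ℕ} {f : MvPolynomial σ ℂ} {k : ℕ}
    (hf : f.IsWeightedHomogeneous w' k) (w : σ → ℕ) (nn : ℕ) :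
    (weightedHomogeneousComponent w nn f).IsWeightedHomogeneous w' k := by
  classical
  intro s hs
  rw [coeff_weightedHomogeneousComponent] at hs
  split_ifs at hs with hcond
  · exact hf hs
  · simp at hs

lemma sum_XZ_of_bihomog {h : MvPolynomial (UnivVars n d) ℂ} (hh : IsBihomogeneous h d 0) :
    h = ∑ α : degIdx n d, C (coeff (mOf α) h) * XZ α := by
  have hsupp : ∀ m ∈ h.support, ∃ α : degIdx n d, m = mOf α := by
    intro m hm
    have hz : Finsupp.weight (weightZ n d) m = d := hh.1 (mem_support_iff.1 hm)
    have hA : Finsupp.weight (weightA n d) m = 0 := hh.2 (mem_support_iff.1 hm)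
    rw [weightZ_apply] at hz
    rw [weightA_apply] at hA
    have hA' : ∀ β, m (Sum.inr β) = 0 :=
      fun β => Finset.sum_eq_zero_iff.1 hA β (Finset.mem_univ β)
    refine ⟨⟨fun i => m (Sum.inl i), hz⟩, ?_⟩
    ext v
    cases v with
    | inl i => simp [mOf]
    | inr β => simp [mOf, hA' β]
  ext m
  have hterm : ∀ α : degIdx n d,
      C (coeff (mOf α) h) * XZ α = monomial (mOf α) (coeff (mOf α) h) := by
    intro α
    rw [XZ_eq_monomial, C_mul_monomial, mul_one]
  rw [Finset.sum_congr rfl fun α _ => hterm α, coeff_sum]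
  simp only [coeff_monomial]
  by_cases hmem : ∃ α₀ : degIdx n d, m = mOf α₀
  · obtain ⟨α₀, rfl⟩ := hmem
    rw [Finset.sum_eq_single α₀]
    · rw [if_pos rfl]
    · intro β _ hβ
      rw [if_neg (fun hc => hβ (mOf_injective hc))]
    · simp
  · push_neg at hmem
    rw [Finset.sum_eq_zero (fun α _ => if_neg (fun hc => hmem α hc.symm))]
    rw [← notMem_support_iff]
    intro hcon
    obtain ⟨α, hα⟩ := hsupp m hcon
    exact hmem α hα

lemma sub_aeval_mem {σ : Type*} (Ψ : σ → MvPolynomial σ ℂ) (f : MvPolynomial σ ℂ) :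
    f - aeval Ψ f ∈ Ideal.span (Set.range fun v => X v - Ψ v) := by
  induction f using MvPolynomial.induction_on with
  | C c =>
    rw [aeval_C, MvPolynomial.algebraMap_eq, sub_self]
    exact Ideal.zero_mem _
  | add p q hp hq =>
    have h := Ideal.add_mem _ hp hq
    rw [map_add]
    convert h using 1
    ring
  | mul_X p v hp =>
    rw [map_mul, aeval_X]
    have key : p * X v - aeval Ψ p * Ψ v
        = p * (X v - Ψ v) + (p - aeval Ψ p) * Ψ v := by ring
    rw [key]
    exact Ideal.add_mem _ (Ideal.mul_mem_left _ _ (Ideal.subset_span ⟨v, rfl⟩))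
      (Ideal.mul_mem_right _ _ hp)

end Stmt6Aux

namespace Stmt6Aux

variable {n d : ℕ}

lemma bihom_pow {f : MvPolynomial (UnivVars n d) ℂ} {p q : ℕ} (hf : IsBihomogeneous f p q)
    (k : ℕ) : IsBihomogeneous (f ^ k) (k * p) (k * q) := by
  induction k with
  | zero => simpa using ⟨isWeightedHomogeneous_one _ _, isWeightedHomogeneous_one _ _⟩
  | succ k ih =>
    rw [pow_succ, Nat.succ_mul, Nat.succ_mul]
    exact bihom_mul ih hf

/-- The multi-index `d·e_{j₀}`. -/
def dIdx (j₀ : Fin (n + 1)) : degIdx n d :=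
  ⟨fun k => if k = j₀ then d else 0, by simp⟩

lemma XZ_dIdx (j₀ : Fin (n + 1)) :
    XZ (dIdx (n := n) (d := d) j₀) = X (Sum.inl j₀) ^ d := by
  rw [XZ]
  have hterm : ∀ k : Fin (n + 1),
      (X (Sum.inl k) : MvPolynomial (UnivVars n d) ℂ) ^ ((dIdx (n := n) (d := d) j₀).1 k)
        = if k = j₀ then X (Sum.inl k) ^ d else 1 := by
    intro k
    show (X (Sum.inl k) : MvPolynomial (UnivVars n d) ℂ) ^ (if k = j₀ then d else 0) = _
    split_ifs <;> simp
  rw [Finset.prod_congr rfl fun k _ => hterm k,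
    Finset.prod_ite_eq' Finset.univ j₀
      (fun k => (X (Sum.inl k) : MvPolynomial (UnivVars n d) ℂ) ^ d)]
  simp

/-- The substitution `Z_i ↦ (Z_i/Z_{j₀})·Z_{j₀}`, `a_β ↦ a_β`. -/
def Psi (Z : Fin (n + 1) → ℂ) (j₀ : Fin (n + 1)) :
    UnivVars n d → MvPolynomial (UnivVars n d) ℂ :=
  Sum.elim (fun i => C (Z i * (Z j₀)⁻¹) * X (Sum.inl j₀)) fun β => X (Sum.inr β)

lemma aeval_Psi_of_bihom (Z : Fin (n + 1) → ℂ) (a : degIdx n d → ℂ) (j₀ : Fin (n + 1))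
    {e : ℕ} {g : MvPolynomial (UnivVars n d) ℂ} (hg : IsBihomogeneous g e 0) :
    aeval (Psi Z j₀) g =
      C (eval (Sum.elim Z a) g * ((Z j₀)⁻¹) ^ e) * X (Sum.inl j₀) ^ e := by
  have key : ∀ s ∈ g.support,
      aeval (Psi Z j₀) (monomial s (coeff s g)) =
        C (eval (Sum.elim Z a) (monomial s (coeff s g)) * ((Z j₀)⁻¹) ^ e)
          * X (Sum.inl j₀) ^ e := by
    intro s hs
    have hz : ∑ i, s (Sum.inl i) = e := by
      rw [← weightZ_apply]; exact hg.1 (mem_support_iff.1 hs)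
    have hA : ∀ β, s (Sum.inr β) = 0 := by
      have h2 := hg.2 (mem_support_iff.1 hs)
      rw [weightA_apply] at h2
      exact fun β => Finset.sum_eq_zero_iff.1 h2 β (Finset.mem_univ β)
    rw [aeval_monomial, eval_monomial]
    rw [Finsupp.prod_pow, Finsupp.prod_pow, Fintype.prod_sum_type, Fintype.prod_sum_type]
    simp only [Psi, Sum.elim_inl, Sum.elim_inr, hA, pow_zero, Finset.prod_const_one, mul_one]
    rw [MvPolynomial.algebraMap_eq]
    have hprod : (∏ i, (C (Z i * (Z j₀)⁻¹) * X (Sum.inl j₀)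
          : MvPolynomial (UnivVars n d) ℂ) ^ s (Sum.inl i))
        = C ((∏ i, Z i ^ s (Sum.inl i)) * ((Z j₀)⁻¹) ^ e) * X (Sum.inl j₀) ^ e := by
      simp only [mul_pow]
      rw [Finset.prod_mul_distrib]
      congr 1
      · simp only [← map_pow]
        rw [← map_prod]
        congr 1
        simp only [mul_pow]
        rw [Finset.prod_mul_distrib, Finset.prod_pow_eq_pow_sum, hz]
      · rw [Finset.prod_pow_eq_pow_sum, hz]
    rw [hprod, ← mul_assoc, ← C_mul, mul_assoc]
  conv_lhs => rw [g.as_sum]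
  rw [map_sum, Finset.sum_congr rfl key]
  have hev : eval (Sum.elim Z a) g
      = ∑ s ∈ g.support, eval (Sum.elim Z a) (monomial s (coeff s g)) := by
    conv_lhs => rw [g.as_sum]
    rw [map_sum]
  rw [hev, Finset.sum_mul, map_sum, Finset.sum_mul]

end Stmt6Aux

namespace Stmt6Aux

variable {n d : ℕ}

lemma decompose_g (Z : Fin (n + 1) → ℂ) (a : degIdx n d → ℂ) (j₀ : Fin (n + 1))
    (hj₀ : Z j₀ ≠ 0) {g : MvPolynomial (UnivVars n d) ℂ} (hg : IsBihomogeneous g (d + 1) 0) :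
    ∃ t : degIdx n d → MvPolynomial (UnivVars n d) ℂ,
      (∀ α, IsBihomogeneous (t α) 1 0) ∧
      (∀ α, eval (Sum.elim Z a) (t α) =
        if α = dIdx j₀ then eval (Sum.elim Z a) g * ((Z j₀)⁻¹) ^ d else 0) ∧
      g = ∑ α, t α * XZ α := by
  classical
  obtain ⟨q, hq⟩ := Ideal.mem_span_range_iff_exists_fun.1 (sub_aeval_mem (Psi Z j₀) g)
  have hψ := aeval_Psi_of_bihom Z a j₀ hg
  set ℓ : Fin (n + 1) → MvPolynomial (UnivVars n d) ℂ :=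
    fun i => X (Sum.inl i) - C (Z i * (Z j₀)⁻¹) * X (Sum.inl j₀) with hℓ
  set ψC : MvPolynomial (UnivVars n d) ℂ :=
    C (eval (Sum.elim Z a) g * ((Z j₀)⁻¹) ^ (d + 1)) * X (Sum.inl j₀) ^ (d + 1) with hψC
  have hℓbihom : ∀ i, IsBihomogeneous (ℓ i) 1 0 := by
    intro i
    apply bihom_sub (bihom_X_inl i)
    have h := bihom_mul (bihom_C (Z i * (Z j₀)⁻¹)) (bihom_X_inl (n := n) (d := d) j₀)
    simpa using h
  have hℓev : ∀ i, eval (Sum.elim Z a) (ℓ i) = 0 := by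
    intro i
    simp only [hℓ, map_sub, map_mul, eval_X, eval_C, Sum.elim_inl]
    field_simp
    ring
  have hsum : (∑ v, q v * (X v - Psi Z j₀ v)) = ∑ i, ℓ i * q (Sum.inl i) := by
    rw [Fintype.sum_sum_type]
    have h2 : ∑ β : degIdx n d, q (Sum.inr β) * (X (Sum.inr β) - Psi Z j₀ (Sum.inr β)) = 0 :=
      Finset.sum_eq_zero fun β _ => by simp [Psi]
    rw [h2, add_zero]
    exact Finset.sum_congr rfl fun i _ => by rw [mul_comm]; rfl
  have hsplit : g = (∑ i, ℓ i * q (Sum.inl i)) + ψC := by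
    rw [← hsum, hq, ← hψ]; ring
  have hψbihom : IsBihomogeneous ψC (d + 1) 0 := by
    have h1 := bihom_pow (bihom_X_inl (n := n) (d := d) j₀) (d + 1)
    have h := bihom_mul (bihom_C (eval (Sum.elim Z a) g * ((Z j₀)⁻¹) ^ (d + 1))) h1
    simpa [hψC] using h
  have hZmul : ∀ (i : Fin (n + 1)) (p : MvPolynomial (UnivVars n d) ℂ),
      weightedHomogeneousComponent (weightZ n d) (d + 1) (ℓ i * p)
        = ℓ i * weightedHomogeneousComponent (weightZ n d) d p := by
    intro i p
    have h := wHC_mul_left (hℓbihom i).1 d p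
    rwa [Nat.add_comm 1 d] at h
  have hAmul : ∀ (i : Fin (n + 1)) (p : MvPolynomial (UnivVars n d) ℂ),
      weightedHomogeneousComponent (weightA n d) 0 (ℓ i * p)
        = ℓ i * weightedHomogeneousComponent (weightA n d) 0 p := by
    intro i p
    have h := wHC_mul_left (hℓbihom i).2 0 p
    simpa using h
  have hstep := congrArg (fun p => weightedHomogeneousComponent (weightA n d) 0
      (weightedHomogeneousComponent (weightZ n d) (d + 1) p)) hsplit
  simp only [map_add, map_sum, hZmul, hAmul,
    hψbihom.1.weightedHomogeneousComponent_same, hψbihom.2.weightedHomogeneousComponent_same,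
    hg.1.weightedHomogeneousComponent_same, hg.2.weightedHomogeneousComponent_same] at hstep
  set k : Fin (n + 1) → MvPolynomial (UnivVars n d) ℂ := fun i =>
    weightedHomogeneousComponent (weightA n d) 0
      (weightedHomogeneousComponent (weightZ n d) d (q (Sum.inl i))) with hkdef
  have hk : ∀ i, IsBihomogeneous (k i) d 0 := by
    intro i
    constructor
    · exact isWH_wHC (weightedHomogeneousComponent_isWeightedHomogeneous d _) _ _
    · exact weightedHomogeneousComponent_isWeightedHomogeneous 0 _
  refine ⟨fun α => (∑ i, C (coeff (mOf α) (k i)) * ℓ i)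
      + (if α = dIdx j₀ then
          C (eval (Sum.elim Z a) g * ((Z j₀)⁻¹) ^ (d + 1)) * X (Sum.inl j₀) else 0),
    ?_, ?_, ?_⟩
  · intro α
    apply bihom_add
    · apply bihom_sum
      intro i _
      have h := bihom_mul (bihom_C (coeff (mOf α) (k i))) (hℓbihom i)
      simpa using h
    · split_ifs
      · have h := bihom_mul (bihom_C (eval (Sum.elim Z a) g * ((Z j₀)⁻¹) ^ (d + 1)))
          (bihom_X_inl (n := n) (d := d) j₀)
        simpa using h
      · exact bihom_zero
  · intro α
    rw [map_add, map_sum]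
    rw [Finset.sum_eq_zero (fun i _ => by rw [map_mul, hℓev i, mul_zero]), zero_add]
    split_ifs with hα
    · rw [map_mul, eval_C, eval_X, Sum.elim_inl]
      rw [pow_succ, mul_assoc, mul_assoc, inv_mul_cancel₀ hj₀, mul_one]
    · exact map_zero _
  · have hB : (∑ α : degIdx n d, (if α = dIdx j₀ then
        C (eval (Sum.elim Z a) g * ((Z j₀)⁻¹) ^ (d + 1)) * X (Sum.inl j₀) else 0) * XZ α)
        = ψC := by
      simp only [ite_mul, zero_mul]
      rw [Finset.sum_ite_eq' Finset.univ (dIdx j₀)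
        (fun α => C (eval (Sum.elim Z a) g * ((Z j₀)⁻¹) ^ (d + 1))
          * X (Sum.inl j₀) * XZ α)]
      rw [if_pos (Finset.mem_univ _), XZ_dIdx, hψC]
      ring
    have hA : (∑ α : degIdx n d, (∑ i, C (coeff (mOf α) (k i)) * ℓ i) * XZ α)
        = ∑ i, ℓ i * k i := by
      rw [Finset.sum_congr rfl fun α _ => Finset.sum_mul _ _ (XZ α)]
      rw [Finset.sum_comm]
      refine Finset.sum_congr rfl fun i _ => ?_
      conv_rhs => rw [sum_XZ_of_bihomog (hk i), Finset.mul_sum]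
      exact Finset.sum_congr rfl fun α _ => by ring
    simp only [add_mul, Finset.sum_add_distrib]
    rw [hA, hB]
    exact hstep
  
end Stmt6Aux

namespace Stmt6Aux

variable {n d : ℕ}

lemma bihom_of_eq {f : MvPolynomial (UnivVars n d) ℂ} {p q p' q' : ℕ}
    (h : IsBihomogeneous f p q) (hp : p = p') (hq : q = q') : IsBihomogeneous f p' q' := by
  subst hp; subst hq; exact h

lemma main_decomp (Z : Fin (n + 1) → ℂ) (a : degIdx n d → ℂ) (j₀ : Fin (n + 1))
    (hj₀ : Z j₀ ≠ 0) {R' : MvPolynomial (UnivVars n d) ℂ} (hR' : IsBihomogeneous R' (d + 1) 1)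
    (hev : eval (Sum.elim Z a) R' = 0) :
    ∃ VA'' : degIdx n d → MvPolynomial (UnivVars n d) ℂ,
      (∀ α, IsBihomogeneous (VA'' α) 1 1) ∧
      (∀ α, eval (Sum.elim Z a) (VA'' α) = 0) ∧
      (∑ α, VA'' α * XZ α) = R' := by
  classical
  have hEuler := euler_weightA hR'.2
  have hgb : ∀ β : degIdx n d, IsBihomogeneous (pderiv (Sum.inr β) R') (d + 1) 0 := by
    intro β
    constructor
    · exact isWH_pderiv hR'.1 _ (by simp [weightZ])
    · exact isWH_pderiv hR'.2 _ (by simp [weightA])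
  choose t ht1 ht2 ht3 using fun β : degIdx n d => decompose_g Z a j₀ hj₀ (hgb β)
  have hevR : ∑ β : degIdx n d, a β * eval (Sum.elim Z a) (pderiv (Sum.inr β) R') = 0 := by
    have hthis := congrArg (eval (Sum.elim Z a)) hEuler
    rw [map_sum] at hthis
    simp only [map_mul, eval_X, Sum.elim_inr] at hthis
    rw [← hthis]
    exact hev
  refine ⟨fun α => ∑ β, X (Sum.inr β) * t β α, ?_, ?_, ?_⟩
  · intro α
    apply bihom_sum
    intro β _
    have h := bihom_mul (bihom_X_inr β) (ht1 β α)
    simpa using h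
  · intro α
    rw [map_sum]
    simp only [map_mul, eval_X, Sum.elim_inr, ht2]
    by_cases hα : α = dIdx j₀
    · simp only [if_pos hα]
      have hre : ∀ β : degIdx n d,
          a β * (eval (Sum.elim Z a) (pderiv (Sum.inr β) R') * ((Z j₀)⁻¹) ^ d)
          = a β * eval (Sum.elim Z a) (pderiv (Sum.inr β) R') * ((Z j₀)⁻¹) ^ d :=
        fun β => by ring
      rw [Finset.sum_congr rfl fun β _ => hre β, ← Finset.sum_mul, hevR, zero_mul]
    · simp [hα]
  · conv_rhs => rw [hEuler]
    rw [Finset.sum_congr rfl fun α (_ : α ∈ Finset.univ) => Finset.sum_mul _ _ (XZ α),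
      Finset.sum_comm]
    refine Finset.sum_congr rfl fun β _ => ?_
    rw [ht3 β, Finset.mul_sum]
    exact Finset.sum_congr rfl fun α _ => by ring

end Stmt6Aux



/-- The twisted logarithmic tangent bundle
`T_{ℙⁿ×ℙ^{N_d}}(-log 𝒳)(1,0)` of the log-manifold `(ℙⁿ × ℙ^{N_d}, 𝒳)` is globally
generated: at every point `([Z],[a]) ∈ ℙⁿ × ℙ^{N_d}`, every logarithmic tangent vector
`((w_Z, w_a) mod Euler directions, residue μ)` is the value of a global section of
`T_{ℙⁿ×ℙ^{N_d}}(-log 𝒳) ⊗ p⁎O_{ℙⁿ}(1)`. -/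
theorem twisted_log_tangent_globally_generated (n d : ℕ) (hd : 1 ≤ d)
    (Z : Fin (n + 1) → ℂ) (a : degIdx n d → ℂ) (hZ : Z ≠ 0) (ha : a ≠ 0)
    (wZ : Fin (n + 1) → ℂ) (wA : degIdx n d → ℂ) (μ : ℂ)
    -- if `([Z],[a]) ∈ 𝒳`, the prescribed vector must be tangent to (the cone of) `𝒳`:
    (htangent : eval (Sum.elim Z a) (univPoly n d) = 0 →
      (∑ i : Fin (n + 1), wZ i * eval (Sum.elim Z a) (pderiv (Sum.inl i) (univPoly n d))) +
        (∑ α : degIdx n d, wA α * eval (Sum.elim Z a) (pderiv (Sum.inr α) (univPoly n d))) = 0) :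
    ∃ (V : TwistedLogTangentSection n d) (c₁ c₂ : ℂ),
      (∀ i, eval (Sum.elim Z a) (V.VZ i) = wZ i + c₁ * Z i) ∧
      (∀ α, eval (Sum.elim Z a) (V.VA α) = wA α + c₂ * a α) ∧
      (eval (Sum.elim Z a) (univPoly n d) = 0 → eval (Sum.elim Z a) V.lam = μ) := by
  classical
  obtain ⟨e, rfl⟩ : ∃ e, d = e + 1 := ⟨d - 1, by omega⟩
  obtain ⟨j₀, hj₀⟩ : ∃ j, Z j ≠ 0 := by
    by_contra h; push_neg at h; exact hZ (funext fun j => h j)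
  obtain ⟨γ, hγ⟩ : ∃ g, a g ≠ 0 := by
    by_contra h; push_neg at h; exact ha (funext fun g => h g)
  set pt := Sum.elim Z a with hpt
  set L : MvPolynomial (UnivVars n (e + 1)) ℂ := C ((Z j₀)⁻¹) * X (Sum.inl j₀) with hL
  set M : MvPolynomial (UnivVars n (e + 1)) ℂ := C ((a γ)⁻¹) * X (Sum.inr γ) with hM
  have hLev : eval pt L = 1 := by
    rw [hL, map_mul, eval_C, eval_X, hpt, Sum.elim_inl, inv_mul_cancel₀ hj₀]
  have hMev : eval pt M = 1 := by
    rw [hM, map_mul, eval_C, eval_X, hpt, Sum.elim_inr, inv_mul_cancel₀ hγ]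
  have hLbihom : IsBihomogeneous L 1 0 := by
    have h := Stmt6Aux.bihom_mul (Stmt6Aux.bihom_C ((Z j₀)⁻¹))
      (Stmt6Aux.bihom_X_inl (n := n) (d := e + 1) j₀)
    simpa [hL] using h
  have hMbihom : IsBihomogeneous M 0 1 := by
    have h := Stmt6Aux.bihom_mul (Stmt6Aux.bihom_C ((a γ)⁻¹)) (Stmt6Aux.bihom_X_inr γ)
    simpa [hM] using h
  have hPbihom : IsBihomogeneous (univPoly n (e + 1)) (e + 1) 1 := Stmt6Aux.bihom_univPoly
  set Q : MvPolynomial (UnivVars n (e + 1)) ℂ :=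
    ∑ i, C (wZ i) * pderiv (Sum.inl i) (univPoly n (e + 1)) with hQ
  set W : MvPolynomial (UnivVars n (e + 1)) ℂ :=
    ∑ α : degIdx n (e + 1), C (wA α) * Stmt6Aux.XZ α with hW
  have hQbihom : IsBihomogeneous Q e 1 := by
    rw [hQ]
    apply Stmt6Aux.bihom_sum
    intro i _
    have hWH : IsBihomogeneous (pderiv (Sum.inl i) (univPoly n (e + 1))) e 1 := by
      constructor
      · exact Stmt6Aux.isWH_pderiv hPbihom.1 _ (by simp [weightZ])
      · exact Stmt6Aux.isWH_pderiv hPbihom.2 _ (by simp [weightA])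
    have h := Stmt6Aux.bihom_mul (Stmt6Aux.bihom_C (wZ i)) hWH
    simpa using h
  have hWbihom : IsBihomogeneous W (e + 1) 0 := by
    rw [hW]
    apply Stmt6Aux.bihom_sum
    intro α _
    have h := Stmt6Aux.bihom_mul (Stmt6Aux.bihom_C (wA α)) (Stmt6Aux.bihom_XZ α)
    simpa using h
  set P0 := eval pt (univPoly n (e + 1)) with hP0
  set H := ∑ i, wZ i * eval pt (pderiv (Sum.inl i) (univPoly n (e + 1))) with hH
  set TA := ∑ α : degIdx n (e + 1), wA α * eval pt (Stmt6Aux.XZ α) with hTA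
  have htang : P0 = 0 → H + TA = 0 := by
    intro h0
    have ht := htangent h0
    simpa only [Stmt6Aux.pderiv_inr_univPoly] using ht
  have hQev : eval pt Q = H := by
    rw [hQ, map_sum, hH]
    exact Finset.sum_congr rfl fun i _ => by rw [map_mul, eval_C]
  have hWev : eval pt W = TA := by
    rw [hW, map_sum, hTA]
    exact Finset.sum_congr rfl fun α _ => by rw [map_mul, eval_C]
  set c₂ : ℂ := if P0 = 0 then 0 else μ - (H + TA) * P0⁻¹ with hc₂
  set R' : MvPolynomial (UnivVars n (e + 1)) ℂ :=
    C μ * L * univPoly n (e + 1) - L * L * Q - L * M * W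
      - C c₂ * L * univPoly n (e + 1) with hR'
  have hR'bihom : IsBihomogeneous R' ((e + 1) + 1) 1 := by
    rw [hR']
    apply Stmt6Aux.bihom_sub
    apply Stmt6Aux.bihom_sub
    apply Stmt6Aux.bihom_sub
    · exact Stmt6Aux.bihom_of_eq
        (Stmt6Aux.bihom_mul (Stmt6Aux.bihom_mul (Stmt6Aux.bihom_C μ) hLbihom) hPbihom)
        (by omega) (by omega)
    · exact Stmt6Aux.bihom_of_eq
        (Stmt6Aux.bihom_mul (Stmt6Aux.bihom_mul hLbihom hLbihom) hQbihom)
        (by omega) (by omega)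
    · exact Stmt6Aux.bihom_of_eq
        (Stmt6Aux.bihom_mul (Stmt6Aux.bihom_mul hLbihom hMbihom) hWbihom)
        (by omega) (by omega)
    · exact Stmt6Aux.bihom_of_eq
        (Stmt6Aux.bihom_mul (Stmt6Aux.bihom_mul (Stmt6Aux.bihom_C c₂) hLbihom) hPbihom)
        (by omega) (by omega)
  have hR'ev : eval pt R' = 0 := by
    rw [hR']
    simp only [map_sub, map_mul, eval_C, hLev, hMev, hQev, hWev, ← hP0]
    by_cases h0 : P0 = 0
    · have ht := htang h0
      rw [hc₂, if_pos h0, h0]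
      ring_nf
      linear_combination -ht
    · rw [hc₂, if_neg h0]
      field_simp
      ring
  obtain ⟨VA'', hVA''bihom, hVA''ev, hVA''sum⟩ :=
    Stmt6Aux.main_decomp Z a j₀ hj₀ hR'bihom hR'ev
  rw [← hpt] at hVA''ev
  refine ⟨⟨fun i => C (wZ i) * (L * L),
      fun α => C (wA α) * (L * M) + C c₂ * (L * X (Sum.inr α)) + VA'' α,
      C μ * L, ?_, ?_, ?_, ?_⟩, 0, c₂, ?_, ?_, ?_⟩
  · intro i
    exact Stmt6Aux.bihom_of_eq
      (Stmt6Aux.bihom_mul (Stmt6Aux.bihom_C (wZ i)) (Stmt6Aux.bihom_mul hLbihom hLbihom))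
      (by omega) (by omega)
  · intro α
    apply Stmt6Aux.bihom_add
    apply Stmt6Aux.bihom_add
    · exact Stmt6Aux.bihom_of_eq
        (Stmt6Aux.bihom_mul (Stmt6Aux.bihom_C (wA α)) (Stmt6Aux.bihom_mul hLbihom hMbihom))
        (by omega) (by omega)
    · exact Stmt6Aux.bihom_of_eq
        (Stmt6Aux.bihom_mul (Stmt6Aux.bihom_C c₂)
          (Stmt6Aux.bihom_mul hLbihom (Stmt6Aux.bihom_X_inr α)))
        (by omega) (by omega)
    · exact hVA''bihom α
  · exact Stmt6Aux.bihom_of_eq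
      (Stmt6Aux.bihom_mul (Stmt6Aux.bihom_C μ) hLbihom) (by omega) (by omega)
  · -- the logarithmic condition
    have h1 : (∑ i, (C (wZ i) * (L * L)) * pderiv (Sum.inl i) (univPoly n (e + 1)))
        = L * L * Q := by
      rw [hQ, Finset.mul_sum]
      exact Finset.sum_congr rfl fun i _ => by ring
    have h2 : (∑ α : degIdx n (e + 1), C (wA α) * (L * M) * Stmt6Aux.XZ α) = L * M * W := by
      rw [hW, Finset.mul_sum]
      exact Finset.sum_congr rfl fun α _ => by ring
    have hU : univPoly n (e + 1) = ∑ α : degIdx n (e + 1), X (Sum.inr α) * Stmt6Aux.XZ α :=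
      rfl
    have h3 : (∑ α : degIdx n (e + 1), C c₂ * (L * X (Sum.inr α)) * Stmt6Aux.XZ α)
        = C c₂ * L * univPoly n (e + 1) := by
      rw [hU, Finset.mul_sum]
      exact Finset.sum_congr rfl fun α _ => by ring
    have hsplit : ∀ α : degIdx n (e + 1),
        (C (wA α) * (L * M) + C c₂ * (L * X (Sum.inr α)) + VA'' α)
            * pderiv (Sum.inr α) (univPoly n (e + 1))
          = C (wA α) * (L * M) * Stmt6Aux.XZ α
            + C c₂ * (L * X (Sum.inr α)) * Stmt6Aux.XZ α + VA'' α * Stmt6Aux.XZ α := by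
      intro α
      rw [Stmt6Aux.pderiv_inr_univPoly]
      ring
    rw [Finset.sum_congr rfl fun α (_ : α ∈ Finset.univ) => hsplit α,
      Finset.sum_add_distrib, Finset.sum_add_distrib, h1, h2, h3, hVA''sum, hR']
    ring
  · intro i
    simp only [hL, map_mul, eval_C, eval_X, hpt, Sum.elim_inl]
    field_simp
    ring
  · intro α
    simp only [hVA''ev α, hL, hM, map_add, map_mul, eval_C, eval_X, hpt, Sum.elim_inl,
      Sum.elim_inr]
    field_simp
    rw [← hpt, hVA''ev α, add_zero]
  · intro _
    simp only [hL, map_mul, eval_C, eval_X, hpt, Sum.elim_inl]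
    field_simp

end
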